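/- Let R = ℂ[α₂, α₃, β₂] with grading deg α₂ = 2, deg α₃ = 4, deg β₂ = 4, equipped with the graded reverse lexicographic order. Suppose an ideal I ⊆ R has leading term ideal containing {α₂^i α₃^j β₂^k : k ≤ 2, 2i + 3j + 2k ≥ 4g − 2} ∪ {β₂³}. Then dim_ℂ R/I ≤ (2g−1)². -/

import Mathlib

/-- The weighted degree of a monomial exponent in `ℂ[α₂, α₃, β₂]`, where
`deg α₂ = 2`, `deg α₃ = 4`, `deg β₂ = 4`. -/
def wdeg (m : Fin 3 →₀ ℕ) : ℕ := 2 * m 0 + 4 * m 1 + 4 * m 2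

/-- The graded reverse lexicographic order (with the above weights) on monomial
exponents: `a < b` iff `wdeg a < wdeg b`, or the weighted degrees agree and the
right-most entry where they differ is larger in `a`. -/
def grevlexLT (a b : Fin 3 →₀ ℕ) : Prop :=
  wdeg a < wdeg b ∨
    (wdeg a = wdeg b ∧ (b 2 < a 2 ∨ (a 2 = b 2 ∧ (b 1 < a 1 ∨ (a 1 = b 1 ∧ b 0 < a 0)))))

/-- `m` is the leading monomial of `p`: it occurs in `p` and dominates every other
monomial of `p` in the graded reverse lexicographic order. -/
def IsLeadingMonomial (p : MvPolynomial (Fin 3) ℂ) (m : Fin 3 →₀ ℕ) : Prop :=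
  m ∈ p.support ∧ ∀ m' ∈ p.support, m' ≠ m → grevlexLT m' m

/-- The leading term ideal of an ideal `I ⊆ ℂ[α₂, α₃, β₂]`: the ideal generated by the
leading monomials of the elements of `I`. -/
noncomputable def leadingTermIdeal (I : Ideal (MvPolynomial (Fin 3) ℂ)) :
    Ideal (MvPolynomial (Fin 3) ℂ) :=
  Ideal.span {q | ∃ p ∈ I, ∃ m, IsLeadingMonomial p m ∧ q = MvPolynomial.monomial m 1}

open MvPolynomial

namespace SimpleTypeAux

lemma grevlexLT_add_left {a b : Fin 3 →₀ ℕ} (c : Fin 3 →₀ ℕ) (h : grevlexLT a b) :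
    grevlexLT (c + a) (c + b) := by
  simp only [grevlexLT, wdeg, Finsupp.add_apply] at h ⊢
  omega

lemma grevlex_wf : WellFounded grevlexLT := by
  have key : ∀ a b : Fin 3 →₀ ℕ, grevlexLT a b →
      InvImage ((· < ·) : ℕ ×ₗ (ℕ ×ₗ ℕ) → ℕ ×ₗ (ℕ ×ₗ ℕ) → Prop)
        (fun m => toLex (wdeg m, toLex (wdeg m - m 2, wdeg m - m 1))) a b := by
    intro a b h
    simp only [InvImage, Prod.Lex.lt_iff, ofLex_toLex]
    simp only [grevlexLT, wdeg] at h ⊢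
    omega
  exact Subrelation.wf (key _ _ ·) (InvImage.wf _ wellFounded_lt)

/-- The "standard monomial candidates". -/
def good (g : ℕ) : Set (Fin 3 →₀ ℕ) :=
  {m | m 2 ≤ 2 ∧ 2 * m 0 + 3 * m 1 + 2 * m 2 < 4 * g - 2}

lemma single_decomp (m : Fin 3 →₀ ℕ) :
    Finsupp.single 0 (m 0) + Finsupp.single 1 (m 1) + Finsupp.single 2 (m 2) = m := by
  ext i
  fin_cases i <;> simp [Finsupp.single_apply]

lemma not_good_mem {g : ℕ} (I : Ideal (MvPolynomial (Fin 3) ℂ))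
    (h1 : ∀ i j k : ℕ, k ≤ 2 → 4 * g - 2 ≤ 2 * i + 3 * j + 2 * k →
      MvPolynomial.monomial
          (Finsupp.single 0 i + Finsupp.single 1 j + Finsupp.single 2 k) (1 : ℂ)
        ∈ leadingTermIdeal I)
    (h2 : MvPolynomial.monomial (Finsupp.single 2 3) (1 : ℂ) ∈ leadingTermIdeal I)
    {m : Fin 3 →₀ ℕ} (hm : m ∉ good g) :
    monomial m (1 : ℂ) ∈ leadingTermIdeal I := by
  by_cases hk : m 2 ≤ 2
  · have hd : 4 * g - 2 ≤ 2 * m 0 + 3 * m 1 + 2 * m 2 := by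
      simp only [good, Set.mem_setOf_eq, not_and, not_lt] at hm
      exact hm hk
    have := h1 (m 0) (m 1) (m 2) hk hd
    rwa [single_decomp] at this
  · have h3 : Finsupp.single 2 3 ≤ m := by
      rw [Finsupp.le_def]
      intro i
      fin_cases i <;> simp [Finsupp.single_apply] <;> omega
    have hdec : monomial m (1 : ℂ)
        = monomial (m - Finsupp.single 2 3) 1 * monomial (Finsupp.single 2 3) 1 := by
      rw [monomial_mul, one_mul, tsub_add_cancel_of_le h3]
    rw [hdec]
    exact Ideal.mul_mem_left _ _ h2

lemma ltIdeal_eq (I : Ideal (MvPolynomial (Fin 3) ℂ)) :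
    leadingTermIdeal I =
      Ideal.span ((fun s => monomial s (1 : ℂ)) ''
        {m | ∃ p ∈ I, IsLeadingMonomial p m}) := by
  unfold leadingTermIdeal
  congr 1
  ext q
  simp only [Set.mem_setOf_eq, Set.mem_image]
  constructor
  · rintro ⟨p, hp, m, hlm, rfl⟩
    exact ⟨m, ⟨p, hp, hlm⟩, rfl⟩
  · rintro ⟨m, ⟨p, hp, hlm⟩, rfl⟩
    exact ⟨p, hp, m, hlm, rfl⟩

lemma key {g : ℕ} (I : Ideal (MvPolynomial (Fin 3) ℂ))
    (h1 : ∀ i j k : ℕ, k ≤ 2 → 4 * g - 2 ≤ 2 * i + 3 * j + 2 * k →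
      MvPolynomial.monomial
          (Finsupp.single 0 i + Finsupp.single 1 j + Finsupp.single 2 k) (1 : ℂ)
        ∈ leadingTermIdeal I)
    (h2 : MvPolynomial.monomial (Finsupp.single 2 3) (1 : ℂ) ∈ leadingTermIdeal I)
    (m : Fin 3 →₀ ℕ) :
    (Ideal.Quotient.mkₐ ℂ I) (monomial m (1 : ℂ)) ∈
      Submodule.span ℂ
        ((fun m => (Ideal.Quotient.mkₐ ℂ I) (monomial m (1 : ℂ))) '' good g) := by
  classical
  induction m using grevlex_wf.induction with
  | _ m ih =>
  by_cases hm : m ∈ good g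
  · exact Submodule.subset_span ⟨m, hm, rfl⟩
  · have hlt := not_good_mem I h1 h2 hm
    rw [ltIdeal_eq] at hlt
    have hsupm : (monomial m (1 : ℂ)).support = {m} := by
      rw [support_monomial, if_neg one_ne_zero]
    obtain ⟨m₀, ⟨p, hpI, hlm⟩, hle⟩ :=
      mem_ideal_span_monomial_image.mp hlt m (by rw [hsupm]; exact Finset.mem_singleton_self m)
    set c := coeff m₀ p with hc
    have hc0 : c ≠ 0 := mem_support_iff.mp hlm.1
    set d := m - m₀ with hd
    have hdm : d + m₀ = m := tsub_add_cancel_of_le hle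
    set f := monomial d c⁻¹ * p with hf
    have hfI : f ∈ I := Ideal.mul_mem_left _ _ hpI
    have hcoefff : coeff m f = 1 := by
      rw [hf, ← hdm, coeff_monomial_mul, ← hc, inv_mul_cancel₀ hc0]
    set q := monomial m (1 : ℂ) - f with hq
    have hsup : ∀ m' ∈ q.support, grevlexLT m' m := by
      intro m' hm'
      have hne : m' ≠ m := by
        intro h
        subst h
        have hco := mem_support_iff.mp hm'
        rw [hq, coeff_sub, coeff_monomial, if_pos rfl, hcoefff, sub_self] at hco
        exact hco rfl
      have hm'f : m' ∈ f.support := by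
        have hsub := support_sub (σ := Fin 3) (monomial m (1 : ℂ)) f hm'
        rw [hsupm] at hsub
        rcases Finset.mem_union.mp hsub with h | h
        · exact absurd (Finset.mem_singleton.mp h) hne
        · exact h
      have hmul := support_mul (monomial d c⁻¹) p hm'f
      obtain ⟨u, hu, t, ht, rfl⟩ := Finset.mem_add.mp hmul
      have hud : u = d := by
        have := support_monomial (s := d) (a := c⁻¹) ▸ hu
        rw [if_neg (inv_ne_zero hc0)] at this
        exact Finset.mem_singleton.mp this
      subst hud
      have htm : t ≠ m₀ := by
        intro h
        exact hne (by rw [h, hdm])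
      have hlt2 := grevlexLT_add_left d (hlm.2 t ht htm)
      rwa [hdm] at hlt2
    have hmk : (Ideal.Quotient.mkₐ ℂ I) (monomial m (1 : ℂ)) = (Ideal.Quotient.mkₐ ℂ I) q := by
      rw [hq, map_sub]
      have : (Ideal.Quotient.mkₐ ℂ I) f = 0 := by
        simpa [Ideal.Quotient.mkₐ_eq_mk] using (Ideal.Quotient.eq_zero_iff_mem).mpr hfI
      rw [this, sub_zero]
    rw [hmk, ← q.support_sum_monomial_coeff, map_sum]
    apply Submodule.sum_mem
    intro m' hm'
    have hrw : monomial m' (coeff m' q) = (coeff m' q) • monomial m' (1 : ℂ) := by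
      rw [smul_monomial, smul_eq_mul, mul_one]
    rw [hrw, map_smul]
    exact Submodule.smul_mem _ _ (ih m' (hsup m' hm'))

lemma sum_odd (n : ℕ) : ∑ b ∈ Finset.range n, (2 * n - 1 - 2 * b) = n ^ 2 := by
  induction n with
  | zero => simp
  | succ n ih =>
    rw [Finset.sum_range_succ]
    have h : ∑ b ∈ Finset.range n, (2 * (n + 1) - 1 - 2 * b)
        = ∑ b ∈ Finset.range n, ((2 * n - 1 - 2 * b) + 2) :=
      Finset.sum_congr rfl fun b hb => by
        have := Finset.mem_range.mp hb; omega
    rw [h, Finset.sum_add_distrib, ih, Finset.sum_const, Finset.card_range, smul_eq_mul]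
    have hn : (n + 1) ^ 2 = n ^ 2 + 2 * n + 1 := by ring
    omega

lemma card_good (g : ℕ) (hg : 1 ≤ g) : Cardinal.mk (good g) ≤ ((2 * g - 1) ^ 2 : ℕ) := by
  classical
  set T : Finset ((_ : ℕ) × ℕ) :=
    (Finset.range (2 * g - 1)).sigma fun b => Finset.range (4 * g - 3 - 2 * b) with hT
  have hmem : ∀ m ∈ good g, (⟨3 * (m 1 / 2) + m 2, 2 * m 0 + m 1 % 2⟩ : (_ : ℕ) × ℕ) ∈ T := by
    rintro m ⟨hk, hdeg⟩
    simp only [hT, Finset.mem_sigma, Finset.mem_range]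
    omega
  let φ : good g → (T : Set ((_ : ℕ) × ℕ)) :=
    fun x => ⟨⟨3 * (x.1 1 / 2) + x.1 2, 2 * x.1 0 + x.1 1 % 2⟩, hmem x.1 x.2⟩
  have hinj : Function.Injective φ := by
    rintro ⟨m, hm⟩ ⟨m', hm'⟩ h
    have e1 : 3 * (m 1 / 2) + m 2 = 3 * (m' 1 / 2) + m' 2 := congrArg (fun x => x.1.1) h
    have e2 : 2 * m 0 + m 1 % 2 = 2 * m' 0 + m' 1 % 2 := congrArg (fun x => x.1.2) h
    have hk := hm.1
    have hk' := hm'.1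
    have h0 : m 0 = m' 0 := by omega
    have h1' : m 1 = m' 1 := by omega
    have h2' : m 2 = m' 2 := by omega
    apply Subtype.ext
    show m = m'
    ext i
    fin_cases i
    · exact h0
    · exact h1'
    · exact h2'
  calc Cardinal.mk (good g) ≤ Cardinal.mk (T : Set ((_ : ℕ) × ℕ)) :=
        Cardinal.mk_le_of_injective hinj
    _ = T.card := Cardinal.mk_coe_finset
    _ = ((2 * g - 1) ^ 2 : ℕ) := by
        rw [hT, Finset.card_sigma]
        simp only [Finset.card_range]
        norm_cast
        calc ∑ b ∈ Finset.range (2 * g - 1), (4 * g - 3 - 2 * b)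
            = ∑ b ∈ Finset.range (2 * g - 1), (2 * (2 * g - 1) - 1 - 2 * b) :=
              Finset.sum_congr rfl fun b hb => by omega
          _ = (2 * g - 1) ^ 2 := sum_odd _

end SimpleTypeAux

/-- Let `R = ℂ[α₂, α₃, β₂]` with the graded reverse lexicographic order for the weights
`(2,4,4)`.  If the leading term ideal of an ideal `I ⊆ R` contains all monomials
`α₂^i α₃^j β₂^k` with `k ≤ 2` and `2i + 3j + 2k ≥ 4g − 2`, together with `β₂³`, then
`dim_ℂ R/I ≤ (2g−1)²`. -/
theorem simple_type_quotient_bound (g : ℕ) (hg : 1 ≤ g)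
    (I : Ideal (MvPolynomial (Fin 3) ℂ))
    (h1 : ∀ i j k : ℕ, k ≤ 2 → 4 * g - 2 ≤ 2 * i + 3 * j + 2 * k →
      MvPolynomial.monomial
          (Finsupp.single 0 i + Finsupp.single 1 j + Finsupp.single 2 k) (1 : ℂ)
        ∈ leadingTermIdeal I)
    (h2 : MvPolynomial.monomial (Finsupp.single 2 3) (1 : ℂ) ∈ leadingTermIdeal I) :
    Module.rank ℂ (MvPolynomial (Fin 3) ℂ ⧸ I) ≤ ((2 * g - 1) ^ 2 : ℕ) := by
  classical
  set s : Set (MvPolynomial (Fin 3) ℂ ⧸ I) :=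
    (fun m => (Ideal.Quotient.mkₐ ℂ I) (monomial m (1 : ℂ))) '' SimpleTypeAux.good g with hs
  have hspan : Submodule.span ℂ s = ⊤ := by
    rw [Submodule.eq_top_iff']
    intro x
    obtain ⟨p, rfl⟩ := Ideal.Quotient.mkₐ_surjective ℂ I x
    rw [← p.support_sum_monomial_coeff, map_sum]
    apply Submodule.sum_mem
    intro v hv
    rw [show monomial v (coeff v p) = (coeff v p) • monomial v (1 : ℂ) by
      rw [smul_monomial, smul_eq_mul, mul_one], map_smul]
    exact Submodule.smul_mem _ _ (SimpleTypeAux.key I h1 h2 v)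
  have h₁ : Module.rank ℂ (MvPolynomial (Fin 3) ℂ ⧸ I) ≤ Cardinal.mk s := by
    conv_lhs => rw [← rank_top ℂ (MvPolynomial (Fin 3) ℂ ⧸ I), ← hspan]
    exact rank_span_le s
  have h₂ : Cardinal.mk s ≤ Cardinal.mk (SimpleTypeAux.good g) := by
    rw [hs]; exact Cardinal.mk_image_le
  exact h₁.trans (h₂.trans (SimpleTypeAux.card_good g hg))
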